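/- The group T' is isomorphic to the multiplicative group F'^* of the quadratic extension F'; in particular T' is cyclic of order q² − 1. An isomorphism is given by letting T' act on the F'-line in F'² corresponding to the fixed point P. -/

import Mathlib

open Matrix CategoryTheory CategoryTheory.Limits Pointwise
open scoped LinearAlgebra.Projectivization

noncomputable section

/-- The projective line over a field `K`, as the projectivization of `K²`. -/
abbrev P1 (K : Type*) [Field K] := ℙ K (Fin 2 → K)

namespace P1

variable {K : Type*} [Field K]

lemma mulVec_ne_zero (g : GL (Fin 2) K) {v : Fin 2 → K} (hv : v ≠ 0) :
    (g : Matrix (Fin 2) (Fin 2) K) *ᵥ v ≠ 0 := by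
  intro h
  apply hv
  have h2 := congrArg (fun w => ((g⁻¹ : GL (Fin 2) K) : Matrix (Fin 2) (Fin 2) K) *ᵥ w) h
  simp only [Matrix.mulVec_mulVec] at h2
  rw [Units.inv_mul, Matrix.one_mulVec, Matrix.mulVec_zero] at h2
  exact h2

/-- The natural action of `GL₂(K)` on the projective line `ℙ¹(K)`. -/
instance : SMul (GL (Fin 2) K) (P1 K) :=
  ⟨fun g x => Projectivization.mk K ((g : Matrix (Fin 2) (Fin 2) K) *ᵥ x.rep)
    (mulVec_ne_zero g x.rep_nonzero)⟩

lemma smul_mk (g : GL (Fin 2) K) (v : Fin 2 → K) (hv : v ≠ 0) :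
    g • Projectivization.mk K v hv
      = Projectivization.mk K ((g : Matrix (Fin 2) (Fin 2) K) *ᵥ v) (mulVec_ne_zero g hv) := by
  show Projectivization.mk K _ _ = _
  rw [Projectivization.mk_eq_mk_iff]
  obtain ⟨a, ha⟩ := Projectivization.exists_smul_eq_mk_rep K v hv
  exact ⟨a, by rw [← ha]; simp [Matrix.mulVec_smul]⟩

instance : MulAction (GL (Fin 2) K) (P1 K) where
  one_smul x := by
    induction x using Projectivization.ind with
    | h v hv => rw [smul_mk]; simp
  mul_smul g h x := by
    induction x using Projectivization.ind with
    | h v hv => rw [smul_mk, smul_mk, smul_mk]; simp only [Units.val_mul, Matrix.mulVec_mulVec]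

end P1

section Setup

variable (F : Type*) [Field F] (F' : Type*) [Field F'] [Algebra F F']

/-- The inclusion `GL₂(F) → GL₂(F')` induced by the inclusion `F ⊆ F'`. -/
def glMap : GL (Fin 2) F →* GL (Fin 2) F' :=
  Matrix.GeneralLinearGroup.map (algebraMap F F')

/-- The scalar matrices, as a homomorphism `Fˣ →* GL₂(F)`. -/
def scalarGL : Fˣ →* GL (Fin 2) F :=
  Units.map (Matrix.scalar (Fin 2)).toMonoidHom

variable {F F'}

/-- The (semilinear) action of a field automorphism `σ ∈ Gal(F'/F)` on `ℙ¹(F')`. -/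
def sigmaPt (σ : F' ≃ₐ[F] F') (x : P1 F') : P1 F' :=
  Projectivization.mk F' (fun i => σ (x.rep i))
    (fun h => x.rep_nonzero (funext fun i => σ.injective (by simpa using congrFun h i)))

variable (F F')

/-- The set of `F`-rational points `ℙ¹(F) ⊆ ℙ¹(F')`. -/
def ratPts : Set (P1 F') :=
  Set.range (fun x : P1 F =>
    Projectivization.mk F' (fun i => algebraMap F F' (x.rep i))
      (fun h => x.rep_nonzero (funext fun i =>
        (algebraMap F F').injective (by simpa using congrFun h i))))

/-- A Borel subgroup of `GL₂(F)`: the stabilizer of a point `∞ ∈ ℙ¹(F)`. -/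
def Bsub (xoo : P1 F) : Subgroup (GL (Fin 2) F) :=
  MulAction.stabilizer (GL (Fin 2) F) xoo

/-- A split maximal torus of `GL₂(F)`: the pointwise stabilizer of `{0, ∞} ⊆ ℙ¹(F)`. -/
def Tsub (x0 xoo : P1 F) : Subgroup (GL (Fin 2) F) :=
  MulAction.stabilizer (GL (Fin 2) F) x0 ⊓ MulAction.stabilizer (GL (Fin 2) F) xoo

/-- The setwise stabilizer of `{0, ∞} ⊆ ℙ¹(F)` in `GL₂(F)`. -/
def Nsub (x0 xoo : P1 F) : Subgroup (GL (Fin 2) F) :=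
  MulAction.stabilizer (GL (Fin 2) F) ({x0, xoo} : Set (P1 F))

/-- A nonsplit maximal torus of `GL₂(F)`: the stabilizer in `GL₂(F)` of a point
`P ∈ ℙ¹(F') ∖ ℙ¹(F)`. -/
def T'sub (P : P1 F') : Subgroup (GL (Fin 2) F) :=
  (MulAction.stabilizer (GL (Fin 2) F') P).comap (glMap F F')

/-- The setwise stabilizer in `GL₂(F)` of the pair `{P, σP}`, for `P ∈ ℙ¹(F') ∖ ℙ¹(F)`. -/
def N'sub (σ : F' ≃ₐ[F] F') (P : P1 F') : Subgroup (GL (Fin 2) F) :=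
  (MulAction.stabilizer (GL (Fin 2) F') ({P, sigmaPt σ P} : Set (P1 F'))).comap (glMap F F')

end Setup


section Aux

variable {F : Type*} [Field F] {F' : Type*} [Field F'] [Algebra F F']

lemma mem_ratPts_of_mk (u : Fin 2 → F) (hu : u ≠ 0)
    (h : (fun i => algebraMap F F' (u i)) ≠ 0) :
    Projectivization.mk F' (fun i => algebraMap F F' (u i)) h ∈ ratPts F F' := by
  refine ⟨Projectivization.mk F u hu, ?_⟩
  obtain ⟨a, ha⟩ := Projectivization.exists_smul_eq_mk_rep F u hu
  rw [Projectivization.mk_eq_mk_iff]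
  refine ⟨Units.map (algebraMap F F').toMonoidHom a, funext fun i => ?_⟩
  have hi := congrFun ha i
  simp only [Pi.smul_apply, Units.smul_def, smul_eq_mul] at hi ⊢
  rw [← hi, RingHom.map_mul]
  simp

end Aux

/-- The group `T'` is isomorphic to `F'ˣ`; in particular it is cyclic of
order `q² − 1`. -/
theorem statement12 {F : Type*} [Field F] [Fintype F] {F' : Type*} [Field F'] [Algebra F F']
    (hdim : Module.finrank F F' = 2)
    (P : P1 F') (hP : P ∉ ratPts F F') :
    Nonempty (↥(T'sub F F' P) ≃* F'ˣ) ∧ IsCyclic ↥(T'sub F F' P) ∧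
      Nat.card ↥(T'sub F F' P) = Fintype.card F ^ 2 - 1 := by
  classical
  set A := algebraMap F F' with hA
  have hAinj : Function.Injective A := (algebraMap F F').injective
  have hv0 : P.rep ≠ 0 := P.rep_nonzero
  -- second coordinate of a representative of P is nonzero
  have hv1 : P.rep 1 ≠ 0 := by
    intro h1
    apply hP
    have h0 : P.rep 0 ≠ 0 := by
      intro h0; apply hv0; funext i; fin_cases i <;> assumption
    have hu : (![1, 0] : Fin 2 → F) ≠ 0 := fun h => one_ne_zero (congrFun h 0)
    have hA10 : (fun i => A ((![1, 0] : Fin 2 → F) i)) ≠ 0 := by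
      intro h
      have := congrFun h 0
      simp [hA] at this
    have hPeq : P = Projectivization.mk F' (fun i => A ((![1, 0] : Fin 2 → F) i)) hA10 := by
      conv_lhs => rw [← P.mk_rep]
      rw [Projectivization.mk_eq_mk_iff]
      refine ⟨Units.mk0 (P.rep 0) h0, funext fun i => ?_⟩
      fin_cases i <;> simp [h1, Units.smul_def, hA]
    rw [hPeq]
    exact mem_ratPts_of_mk _ hu hA10
  set z : F' := P.rep 0 / P.rep 1 with hzdef
  have hw : (![z, 1] : Fin 2 → F') ≠ 0 := fun h => one_ne_zero (congrFun h 1)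
  have hPw : P = Projectivization.mk F' ![z, 1] hw := by
    conv_lhs => rw [← P.mk_rep]
    rw [Projectivization.mk_eq_mk_iff]
    refine ⟨Units.mk0 (P.rep 1) hv1, funext fun i => ?_⟩
    fin_cases i <;>
      simp [Units.smul_def, hzdef, mul_div_cancel₀, mul_comm, div_mul_cancel₀, hv1]
  -- z is not rational
  have hz : ∀ t : F, z ≠ A t := by
    intro t ht
    apply hP
    have hu : (![t, 1] : Fin 2 → F) ≠ 0 := fun h => one_ne_zero (congrFun h 1)
    have hfu : (fun i => A ((![t, 1] : Fin 2 → F) i)) ≠ 0 := by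
      intro h
      have := congrFun h 1
      simp [hA] at this
    have hPeq : P = Projectivization.mk F' (fun i => A ((![t, 1] : Fin 2 → F) i)) hfu := by
      rw [hPw, Projectivization.mk_eq_mk_iff]
      refine ⟨1, funext fun i => ?_⟩
      fin_cases i <;> simp [ht, hA]
    rw [hPeq]
    exact mem_ratPts_of_mk _ hu hfu
  clear hzdef
  clear_value z
  -- uniqueness of representations a + b z
  have huniq : ∀ a b : F, A a + A b * z = 0 → a = 0 ∧ b = 0 := by
    intro a b hab
    by_cases hb : b = 0
    · refine ⟨hAinj ?_, hb⟩
      rw [hb] at hab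
      simpa using hab
    · exfalso
      have hAb : A b ≠ 0 := fun h => hb (hAinj (by simpa using h))
      apply hz (-a / b)
      rw [map_div₀, map_neg, eq_div_iff hAb]
      linear_combination hab
  have huniq2 : ∀ a b c d : F, A a + A b * z = A c + A d * z → a = c ∧ b = d := by
    intro a b c d h
    have := huniq (a - c) (b - d) (by rw [map_sub, map_sub]; linear_combination h)
    exact ⟨sub_eq_zero.mp this.1, sub_eq_zero.mp this.2⟩
  -- a basis 1, z of F' over F
  have hli : LinearIndependent F ![(1 : F'), z] := by
    rw [linearIndependent_fin2]
    constructor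
    · show z ≠ 0
      intro h
      exact hz 0 (by simp [h])
    · intro a ha
      simp only [Matrix.cons_val_one, Matrix.head_cons, Matrix.cons_val_zero] at ha
      have ha0 : a ≠ 0 := by
        rintro rfl; simp at ha
      apply hz a⁻¹
      rw [map_inv₀]
      refine eq_inv_of_mul_eq_one_left ?_
      rw [Algebra.smul_def] at ha
      rw [mul_comm]
      exact ha
  obtain ⟨b, hbcoe⟩ : ∃ b : Module.Basis (Fin 2) F F', ⇑b = ![(1 : F'), z] :=
    ⟨basisOfLinearIndependentOfCardEqFinrank hli (by simp [hdim]),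
      coe_basisOfLinearIndependentOfCardEqFinrank _ _⟩
  have hspan : ∀ x : F', ∃ c d : F, x = A d + A c * z := by
    intro x
    have hx := b.sum_repr x
    rw [Fin.sum_univ_two, hbcoe] at hx
    simp only [Matrix.cons_val_zero, Matrix.cons_val_one, Matrix.head_cons] at hx
    rw [Algebra.smul_def, Algebra.smul_def] at hx
    exact ⟨b.repr x 1, b.repr x 0, by linear_combination -hx⟩
  obtain ⟨al, be, hz2⟩ := hspan (z * z)
  -- membership in the torus
  have hmem : ∀ g : GL (Fin 2) F, g ∈ T'sub F F' P ↔
      ∃ a : F'ˣ, (a : F') • (![z, 1] : Fin 2 → F') =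
        ((glMap F F' g : GL (Fin 2) F') : Matrix (Fin 2) (Fin 2) F') *ᵥ ![z, 1] := by
    intro g
    rw [T'sub, Subgroup.mem_comap, MulAction.mem_stabilizer_iff, hPw, P1.smul_mk,
      Projectivization.mk_eq_mk_iff]
    constructor
    · rintro ⟨a, ha⟩
      exact ⟨a, by rw [← ha]; simp [Units.smul_def]⟩
    · rintro ⟨a, ha⟩
      exact ⟨a, by rw [← ha]; simp [Units.smul_def]⟩
  -- entries of the extended matrix
  have hent : ∀ (g : GL (Fin 2) F) (i j : Fin 2),
      ((glMap F F' g : GL (Fin 2) F') : Matrix (Fin 2) (Fin 2) F') i j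
        = A ((g : Matrix (Fin 2) (Fin 2) F) i j) := by
    intro g i j
    simp [glMap, hA]
  have hmv : ∀ (g : GL (Fin 2) F) (i : Fin 2),
      (((glMap F F' g : GL (Fin 2) F') : Matrix (Fin 2) (Fin 2) F') *ᵥ ![z, 1]) i
        = A ((g : Matrix (Fin 2) (Fin 2) F) i 0) * z
          + A ((g : Matrix (Fin 2) (Fin 2) F) i 1) := by
    intro g i
    rw [Matrix.mulVec, dotProduct, Fin.sum_univ_two, hent, hent]
    simp
  set f : GL (Fin 2) F → F' := fun g =>
    A ((g : Matrix (Fin 2) (Fin 2) F) 1 0) * z + A ((g : Matrix (Fin 2) (Fin 2) F) 1 1) with hf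
  have hkey : ∀ g : GL (Fin 2) F, g ∈ T'sub F F' P →
      (((glMap F F' g : GL (Fin 2) F') : Matrix (Fin 2) (Fin 2) F') *ᵥ ![z, 1])
        = f g • (![z, 1] : Fin 2 → F') ∧ f g ≠ 0 := by
    intro g hg
    obtain ⟨a, ha⟩ := (hmem g).1 hg
    have ha1 := congrFun ha 1
    rw [hmv] at ha1
    simp only [Pi.smul_apply, Matrix.cons_val_one, Matrix.head_cons, Matrix.cons_val_zero,
      smul_eq_mul, mul_one] at ha1
    have hfa : f g = (a : F') := by simp only [hf]; rw [← ha1]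
    constructor
    · rw [hfa, ← ha]
    · rw [hfa]; exact a.ne_zero
  have hone : f 1 = 1 := by
    have h10 : ((1 : GL (Fin 2) F) : Matrix (Fin 2) (Fin 2) F) 1 0 = 0 := by
      simp [Matrix.one_apply]
    have h11 : ((1 : GL (Fin 2) F) : Matrix (Fin 2) (Fin 2) F) 1 1 = 1 := by
      simp [Matrix.one_apply]
    show A (((1 : GL (Fin 2) F) : Matrix (Fin 2) (Fin 2) F) 1 0) * z
        + A (((1 : GL (Fin 2) F) : Matrix (Fin 2) (Fin 2) F) 1 1) = 1
    rw [h10, h11]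
    simp
  have hmul : ∀ g h : GL (Fin 2) F, g ∈ T'sub F F' P → h ∈ T'sub F F' P →
      f (g * h) = f g * f h := by
    intro g h hg hh
    have hgh : g * h ∈ T'sub F F' P := mul_mem hg hh
    have e1 := (hkey _ hgh).1
    have e2 : (((glMap F F' (g * h) : GL (Fin 2) F') : Matrix (Fin 2) (Fin 2) F') *ᵥ ![z, 1])
        = (f g * f h) • (![z, 1] : Fin 2 → F') := by
      have hval : ((glMap F F' (g * h) : GL (Fin 2) F') : Matrix (Fin 2) (Fin 2) F')
          = ((glMap F F' g : GL (Fin 2) F') : Matrix (Fin 2) (Fin 2) F')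
            * ((glMap F F' h : GL (Fin 2) F') : Matrix (Fin 2) (Fin 2) F') := by
        rw [_root_.map_mul (glMap F F') g h]
        rfl
      rw [hval, ← Matrix.mulVec_mulVec, (hkey h hh).1, Matrix.mulVec_smul,
        (hkey g hg).1, smul_smul, mul_comm (f h) (f g)]
    have := congrFun (e1.symm.trans e2) 1
    simpa using this
  -- the monoid hom to F'ˣ
  set φ : ↥(T'sub F F' P) →* F'ˣ :=
    { toFun := fun g => Units.mk0 (f g.1) (hkey g.1 g.2).2
      map_one' := Units.ext (by simpa using hone)
      map_mul' := fun g h => Units.ext (by simpa using hmul g.1 h.1 g.2 h.2) } with hφ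
  have hinj : Function.Injective φ := by
    rw [injective_iff_map_eq_one]
    intro g hg1
    have hfg : f g.1 = 1 := by
      have := congrArg (Units.val) hg1
      simpa [hφ] using this
    have hMw := (hkey g.1 g.2).1
    rw [hfg, one_smul] at hMw
    have h0 := congrFun hMw 0
    have h1 := congrFun hMw 1
    rw [hmv] at h0 h1
    simp only [Matrix.cons_val_zero, Matrix.cons_val_one, Matrix.head_cons] at h0 h1
    -- h0 : A (g 0 0) * z + A (g 0 1) = z ; h1 : A (g 1 0) * z + A (g 1 1) = 1
    have e0 := huniq2 ((g.1 : Matrix (Fin 2) (Fin 2) F) 0 1) ((g.1 : Matrix (Fin 2) (Fin 2) F) 0 0)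
      0 1 (by rw [RingHom.map_zero, RingHom.map_one]; linear_combination h0)
    have e1 := huniq2 ((g.1 : Matrix (Fin 2) (Fin 2) F) 1 1) ((g.1 : Matrix (Fin 2) (Fin 2) F) 1 0)
      1 0 (by rw [RingHom.map_zero, RingHom.map_one]; linear_combination h1)
    ext i j
    fin_cases i <;> fin_cases j <;>
      simp [Matrix.one_apply, e0.1, e0.2, e1.1, e1.2]
  have hsurj : Function.Surjective φ := by
    intro u
    obtain ⟨c, d, hu⟩ := hspan (u : F')
    have hu0 : (u : F') ≠ 0 := u.ne_zero
    set m : Matrix (Fin 2) (Fin 2) F := !![c * al + d, c * be; c, d] with hm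
    have hdet : m.det ≠ 0 := by
      rw [hm, Matrix.det_fin_two_of]
      intro h
      by_cases hc : c = 0
      · rw [hc] at h
        have hd : d = 0 := mul_self_eq_zero.mp (by linear_combination h)
        rw [hc, hd] at hu
        simp only [map_zero, zero_mul, add_zero, zero_add] at hu
        exact hu0 hu
      · have hAc : A c ≠ 0 := fun hh => hc (hAinj (by simpa using hh))
        have hdet0 : A (c * al + d) * A d - A (c * be) * A c = 0 := by
          rw [← _root_.map_mul A, ← _root_.map_mul A, ← map_sub, h, map_zero]
        have hprod : ((A d + A c * z) * (A c * z - A d - A al * A c)) = 0 := by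
          simp only [_root_.map_add, _root_.map_mul] at hdet0
          linear_combination (A c * A c) * hz2 - hdet0
        rw [← hu] at hprod
        have h2 : A c * z - A d - A al * A c = 0 := by
          rcases mul_eq_zero.1 hprod with h' | h'
          · exact absurd h' hu0
          · exact h'
        apply hz ((d + al * c) / c)
        rw [map_div₀, eq_div_iff hAc]
        simp only [_root_.map_add, _root_.map_mul]
        linear_combination h2
    set g : GL (Fin 2) F := Matrix.GeneralLinearGroup.mkOfDetNeZero m hdet with hg
    have hgval : (g : Matrix (Fin 2) (Fin 2) F) = m := rfl
    have hgmem : g ∈ T'sub F F' P := by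
      rw [hmem]
      refine ⟨u, funext fun i => ?_⟩
      rw [hmv]
      have h10 : (g : Matrix (Fin 2) (Fin 2) F) 1 0 = c := by rw [hgval, hm]; simp
      have h11 : (g : Matrix (Fin 2) (Fin 2) F) 1 1 = d := by rw [hgval, hm]; simp
      have h00 : (g : Matrix (Fin 2) (Fin 2) F) 0 0 = c * al + d := by rw [hgval, hm]; simp
      have h01 : (g : Matrix (Fin 2) (Fin 2) F) 0 1 = c * be := by rw [hgval, hm]; simp
      fin_cases i
      · show (u : F') * z = A ((g : Matrix (Fin 2) (Fin 2) F) 0 0) * z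
          + A ((g : Matrix (Fin 2) (Fin 2) F) 0 1)
        rw [h00, h01]
        simp only [_root_.map_add, _root_.map_mul]
        linear_combination z * hu + A c * hz2
      · show (u : F') * 1 = A ((g : Matrix (Fin 2) (Fin 2) F) 1 0) * z
          + A ((g : Matrix (Fin 2) (Fin 2) F) 1 1)
        rw [h10, h11]
        linear_combination hu
    refine ⟨⟨g, hgmem⟩, Units.ext ?_⟩
    show f g = (u : F')
    rw [hf]
    simp only []
    have h10 : (g : Matrix (Fin 2) (Fin 2) F) 1 0 = c := by rw [hgval, hm]; simp
    have h11 : (g : Matrix (Fin 2) (Fin 2) F) 1 1 = d := by rw [hgval, hm]; simp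
    show A ((g : Matrix (Fin 2) (Fin 2) F) 1 0) * z + A ((g : Matrix (Fin 2) (Fin 2) F) 1 1)
      = (u : F')
    rw [h10, h11, hu]
    ring
  let e : ↥(T'sub F F' P) ≃* F'ˣ := MulEquiv.ofBijective φ ⟨hinj, hsurj⟩
  have hFin : Finite F' := Finite.of_equiv _ b.equivFun.toEquiv.symm
  refine ⟨⟨e⟩, isCyclic_of_surjective e.symm e.symm.surjective, ?_⟩
  rw [Nat.card_congr e.toEquiv, Nat.card_units]
  congr 1
  rw [Nat.card_congr b.equivFun.toEquiv]
  simp [Nat.card_eq_fintype_card]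


end
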